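/- Let (G, w) be an edge-weighted simple graph on a finite type V, let g be a spline on (G, w), and let u, x be distinct vertices. Then for every path p from u to x in G, the gcd of the weights of the edges of p divides g(u) − g(x); consequently D(u, x) divides g(u) − g(x), where D(u, x) is the lcm over all paths p from u to x of the gcd of the weights of the edges of p. -/
import Mathlib


/-- An integer spline on the edge-weighted graph `(G, w)`: a vertex labeling `g : V → ℤ` such
that for every edge `{u, x}` of `G`, the weight `w {u, x}` divides `g u - g x` in `ℤ`. -/
def IsSpline {V : Type*} (G : SimpleGraph V) (w : Sym2 V → ℕ) (g : V → ℤ) : Prop :=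
  ∀ u x : V, G.Adj u x → (w s(u, x) : ℤ) ∣ g u - g x

/-- `D_G(u, x)`: the lcm, over all paths `p` from `u` to `x` in `G`, of the gcd of the weights
of the edges of `p` (the lcm of the empty set is `1`). -/
noncomputable def pathLcm {V : Type*} [Fintype V] [DecidableEq V] (G : SimpleGraph V)
    [DecidableRel G.Adj] (w : Sym2 V → ℕ) (u x : V) : ℕ :=
  Finset.univ.lcm (fun p : G.Path u x => (p.1.edges.map w).foldr Nat.gcd 0)

/-- If `g` is a spline on `(G, w)` and `u ≠ x`, then for every path `p` from `u` to `x` the gcd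
of the weights of the edges of `p` divides `g u - g x`; consequently `D(u, x)` divides
`g u - g x`. -/

lemma walk_gcd_dvd {V : Type*} {G : SimpleGraph V} {w : Sym2 V → ℕ} {g : V → ℤ}
    (hg : IsSpline G w g) : ∀ {u x : V} (p : G.Walk u x),
    (((p.edges.map w).foldr Nat.gcd 0 : ℕ) : ℤ) ∣ g u - g x := by
  intro u x p
  induction p with
  | nil => simp
  | cons h p ih =>
    rename_i a b c
    simp only [SimpleGraph.Walk.edges_cons, List.map_cons, List.foldr_cons]
    have h1 : ((Nat.gcd (w s(a, b)) ((p.edges.map w).foldr Nat.gcd 0) : ℕ) : ℤ) ∣ g a - g b :=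
      dvd_trans (Int.natCast_dvd_natCast.mpr (Nat.gcd_dvd_left _ _)) (hg a b h)
    have h2 : ((Nat.gcd (w s(a, b)) ((p.edges.map w).foldr Nat.gcd 0) : ℕ) : ℤ) ∣ g b - g c :=
      dvd_trans (Int.natCast_dvd_natCast.mpr (Nat.gcd_dvd_right _ _)) ih
    have := dvd_add h1 h2
    simpa using this

theorem path_gcd_dvd_spline_diff {V : Type*} [Fintype V] [DecidableEq V]
    (G : SimpleGraph V) [DecidableRel G.Adj] (w : Sym2 V → ℕ)
    (hw : ∀ e ∈ G.edgeSet, 0 < w e)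
    (g : V → ℤ) (hg : IsSpline G w g) (u x : V) (hux : u ≠ x) :
    (∀ p : G.Path u x, (((p.1.edges.map w).foldr Nat.gcd 0 : ℕ) : ℤ) ∣ g u - g x) ∧
      ((pathLcm G w u x : ℕ) : ℤ) ∣ g u - g x := by
  have key : ∀ p : G.Path u x, (((p.1.edges.map w).foldr Nat.gcd 0 : ℕ) : ℤ) ∣ g u - g x :=
    fun p => walk_gcd_dvd hg p.1
  refine ⟨key, ?_⟩
  rcases eq_or_ne (g u - g x) 0 with h0 | h0
  · simp [h0]
  · rw [Int.natCast_dvd]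
    apply Finset.lcm_dvd
    intro p _
    rw [← Int.natCast_dvd]
    exact key p
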